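/- arXiv:1701.00848 — 4 statements merged into one kernel-verified Lean document; each statement's English description precedes it below -/
import Mathlib

section
/- For all natural numbers i and j, the natural number 2^(3i+4j) · 3^(i+2j) · i! · j! divides (4i + 6j + 1)!; equivalently, b(i,j) = (4i + 6j + 1)! / (2^(3i+4j) · 3^(i+2j) · i! · j!) is an integer. -/
open Nat

lemma pow_factorial_mul_factorial_dvd (n i : ℕ) (hn : 0 < n) :
    (n !) ^ i * i ! ∣ (n * i)! := by
  induction i with
  | zero => simp
  | succ i ih =>
    have h1 : (i + 1) * n ! * (n * i)! ∣ (n * (i + 1))! := by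
      have key : (n - 1)! * (n * i)! ∣ (n * i + (n - 1))! := by
        rw [Nat.add_comm]
        exact Nat.factorial_mul_factorial_dvd_factorial_add _ _
      have hrw : n * (i + 1) = (n * i + (n - 1)) + 1 := by
        have := Nat.succ_pred_eq_of_pos hn
        ring_nf
        omega
      rw [hrw, factorial_succ]
      have heq : (i + 1) * n ! * (n * i)! =
          (n * i + (n - 1) + 1) * ((n - 1)! * (n * i)!) := by
        have h2 : n * (n - 1)! = n ! := Nat.mul_factorial_pred hn.ne'
        have h3 : n * i + (n - 1) + 1 = n * (i + 1) := hrw.symm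
        rw [h3]
        rw [← h2]; ring
      rw [heq]
      exact mul_dvd_mul_left _ key
    have h2 : (n !) ^ (i + 1) * (i + 1)! ∣ (i + 1) * n ! * (n * i)! := by
      have : (n !) ^ (i + 1) * (i + 1)! = (i + 1) * n ! * ((n !) ^ i * i !) := by
        rw [pow_succ, factorial_succ]; ring
      rw [this]
      exact mul_dvd_mul_left _ ih
    exact h2.trans h1

/-- `2^(3i+4j) · 3^(i+2j) · i! · j!` divides `(4i + 6j + 1)!`. -/
theorem b_integer (i j : ℕ) :
    2 ^ (3 * i + 4 * j) * 3 ^ (i + 2 * j) * i ! * j ! ∣ (4 * i + 6 * j + 1)! := by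
  have hi : (4 !) ^ i * i ! ∣ (4 * i)! := pow_factorial_mul_factorial_dvd 4 i (by norm_num)
  have hj : (6 !) ^ j * j ! ∣ (6 * j)! := pow_factorial_mul_factorial_dvd 6 j (by norm_num)
  have h144 : (144 : ℕ) ^ j * j ! ∣ (6 !) ^ j * j ! := by
    apply mul_dvd_mul_right
    exact pow_dvd_pow_of_dvd (by norm_num [Nat.factorial]) j
  have hadd : (4 * i)! * (6 * j)! ∣ (4 * i + 6 * j)! :=
    Nat.factorial_mul_factorial_dvd_factorial_add _ _
  have hfin : (4 * i + 6 * j)! ∣ (4 * i + 6 * j + 1)! :=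
    Nat.factorial_dvd_factorial (by omega)
  have key : 2 ^ (3 * i + 4 * j) * 3 ^ (i + 2 * j) * i ! * j ! =
      ((4 !) ^ i * i !) * ((144 : ℕ) ^ j * j !) := by
    have : (2:ℕ) ^ (3 * i + 4 * j) * 3 ^ (i + 2 * j) = 24 ^ i * 144 ^ j := by
      rw [pow_add, pow_add]
      rw [show (24:ℕ) = 2^3 * 3 by norm_num, show (144:ℕ) = 2^4 * 3^2 by norm_num]
      rw [mul_pow, mul_pow, ← pow_mul, ← pow_mul, ← pow_mul]
      ring
    rw [show (4:ℕ)! = 24 from by norm_num [Nat.factorial]]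
    rw [this]; ring
  rw [key]
  exact ((mul_dvd_mul hi (h144.trans hj)).trans hadd).trans hfin
end

section
/- For all natural numbers i and j, the 2-adic valuation of (4i + 6j + 1)! satisfies ν₂((4i + 6j + 1)!) ≥ 3i + 4j + ν₂(i!) + ν₂(j!). -/
open Nat

lemma padic_mono (p : ℕ) [Fact p.Prime] {a b : ℕ} (hab : a ∣ b) (hb : b ≠ 0) :
    padicValNat p a ≤ padicValNat p b :=
  (padicValNat_dvd_iff_le hb).mp (dvd_trans pow_padicValNat_dvd hab)

lemma two_mul_fact (n : ℕ) : padicValNat 2 (2 * n)! = padicValNat 2 n ! + n := by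
  haveI : Fact (Nat.Prime 2) := ⟨Nat.prime_two⟩
  exact padicValNat_factorial_mul n

/-- `ν₂((4i + 6j + 1)!) ≥ 3i + 4j + ν₂(i!) + ν₂(j!)`. -/
theorem nu_two_factorial_lower_bound (i j : ℕ) :
    3 * i + 4 * j + padicValNat 2 (i !) + padicValNat 2 (j !)
      ≤ padicValNat 2 ((4 * i + 6 * j + 1)!) := by
  haveI : Fact (Nat.Prime 2) := ⟨Nat.prime_two⟩
  have h4i : padicValNat 2 (4 * i)! = padicValNat 2 i ! + 3 * i := by
    have h1 := two_mul_fact (2 * i)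
    have h2 := two_mul_fact i
    have : (4 : ℕ) * i = 2 * (2 * i) := by ring
    rw [this, h1, h2]; ring
  have h6j : padicValNat 2 (j !) + padicValNat 2 (j !) + 4 * j ≤ padicValNat 2 (6 * j)! := by
    have h1 : padicValNat 2 (6 * j)! = padicValNat 2 (3 * j)! + 3 * j := by
      have : (6 : ℕ) * j = 2 * (3 * j) := by ring
      rw [this, two_mul_fact]
    have hd : (2 * j)! * j ! ∣ (3 * j)! := by
      have := Nat.factorial_mul_factorial_dvd_factorial_add (2 * j) j
      rwa [show 2 * j + j = 3 * j by ring] at this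
    have h2 : padicValNat 2 ((2 * j)! * j !) ≤ padicValNat 2 (3 * j)! :=
      padic_mono 2 hd (factorial_ne_zero _)
    rw [padicValNat.mul (factorial_ne_zero _) (factorial_ne_zero _), two_mul_fact] at h2
    omega
  have hd2 : (4 * i)! * (6 * j)! ∣ (4 * i + 6 * j)! :=
    Nat.factorial_mul_factorial_dvd_factorial_add _ _
  have h3 : padicValNat 2 ((4 * i)! * (6 * j)!) ≤ padicValNat 2 (4 * i + 6 * j)! :=
    padic_mono 2 hd2 (factorial_ne_zero _)
  rw [padicValNat.mul (factorial_ne_zero _) (factorial_ne_zero _)] at h3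
  have h4 : padicValNat 2 (4 * i + 6 * j)! ≤ padicValNat 2 ((4 * i + 6 * j + 1)!) :=
    padic_mono 2 (Nat.factorial_dvd_factorial (Nat.le_succ _)) (factorial_ne_zero _)
  omega
end

section
/- For all natural numbers i and j, the 3-adic valuation of (4i + 6j + 1)! satisfies ν₃((4i + 6j + 1)!) ≥ i + 2j + ν₃(i!) + ν₃(j!). -/
open Nat

private lemma nu_le_of_dvd {p d n : ℕ} [Fact p.Prime] (hd : d ∣ n) (hn : n ≠ 0) :
    padicValNat p d ≤ padicValNat p n := by
  obtain ⟨k, rfl⟩ := hd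
  have hd0 : d ≠ 0 := by rintro rfl; simp at hn
  have hk0 : k ≠ 0 := by rintro rfl; simp at hn
  rw [padicValNat.mul hd0 hk0]
  exact Nat.le_add_right _ _

private lemma nu_three_mul (n : ℕ) :
    padicValNat 3 ((3 * n)!) = n + padicValNat 3 (n !) := by
  haveI : Fact (Nat.Prime 3) := ⟨by norm_num⟩
  induction n with
  | zero => simp
  | succ n ih =>
    have h1 : (3 * (n + 1))! = (3 * n)! * (3 * n + 1) * (3 * n + 2) * (3 * n + 3) := by
      have : 3 * (n + 1) = 3 * n + 3 := by ring
      rw [this]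
      rw [show 3 * n + 3 = (3 * n + 2) + 1 from rfl, Nat.factorial_succ,
        show 3 * n + 2 = (3 * n + 1) + 1 from rfl, Nat.factorial_succ,
        Nat.factorial_succ]
      ring
    rw [h1, padicValNat.mul (by positivity) (by omega),
      padicValNat.mul (by positivity) (by omega),
      padicValNat.mul (Nat.factorial_ne_zero _) (by omega)]
    have h2 : padicValNat 3 (3 * n + 1) = 0 :=
      padicValNat.eq_zero_of_not_dvd (by omega)
    have h3 : padicValNat 3 (3 * n + 2) = 0 :=
      padicValNat.eq_zero_of_not_dvd (by omega)
    have h4 : padicValNat 3 (3 * n + 3) = 1 + padicValNat 3 (n + 1) := by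
      have : 3 * n + 3 = 3 * (n + 1) := by ring
      rw [this, padicValNat.mul (by norm_num) (by omega), padicValNat.self (by norm_num)]
    rw [h2, h3, h4, Nat.factorial_succ,
      padicValNat.mul (by omega) (Nat.factorial_ne_zero _), ih]
    ring

/-- `ν₃((4i + 6j + 1)!) ≥ i + 2j + ν₃(i!) + ν₃(j!)`. -/
theorem nu_three_factorial_lower_bound (i j : ℕ) :
    i + 2 * j + padicValNat 3 (i !) + padicValNat 3 (j !)
      ≤ padicValNat 3 ((4 * i + 6 * j + 1)!) := by
  haveI : Fact (Nat.Prime 3) := ⟨by norm_num⟩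
  have hdvd : (4 * i)! * (6 * j)! ∣ (4 * i + 6 * j + 1)! :=
    (Nat.factorial_mul_factorial_dvd_factorial_add _ _).trans
      (Nat.factorial_dvd_factorial (by omega))
  have h1 : padicValNat 3 ((4 * i)!) + padicValNat 3 ((6 * j)!)
      ≤ padicValNat 3 ((4 * i + 6 * j + 1)!) := by
    rw [← padicValNat.mul (Nat.factorial_ne_zero _) (Nat.factorial_ne_zero _)]
    exact nu_le_of_dvd hdvd (Nat.factorial_ne_zero _)
  -- ν₃((4i)!) ≥ i + ν₃(i!)
  have h2 : i + padicValNat 3 (i !) ≤ padicValNat 3 ((4 * i)!) := by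
    have hd : (3 * i)! * i ! ∣ (4 * i)! := by
      have := Nat.factorial_mul_factorial_dvd_factorial_add (3 * i) i
      rwa [show 3 * i + i = 4 * i by ring] at this
    calc i + padicValNat 3 (i !)
        ≤ padicValNat 3 ((3 * i)!) + padicValNat 3 (i !) := by
          rw [nu_three_mul]; omega
      _ = padicValNat 3 ((3 * i)! * i !) :=
          (padicValNat.mul (Nat.factorial_ne_zero _) (Nat.factorial_ne_zero _)).symm
      _ ≤ padicValNat 3 ((4 * i)!) := nu_le_of_dvd hd (Nat.factorial_ne_zero _)
  -- ν₃((6j)!) ≥ 2j + ν₃(j!)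
  have h3 : 2 * j + padicValNat 3 (j !) ≤ padicValNat 3 ((6 * j)!) := by
    have h6 : (6 * j)! = (3 * (2 * j))! := by ring_nf
    rw [h6, nu_three_mul]
    have hj : padicValNat 3 (j !) ≤ padicValNat 3 ((2 * j)!) :=
      nu_le_of_dvd (Nat.factorial_dvd_factorial (by omega)) (Nat.factorial_ne_zero _)
    omega
  omega
end

section
/- Assume a : ℕ × ℕ → ℚ satisfies the Weierstrass recursion and that every a(i,j) is an integer. If the divisibility hypothesis holds for the prime 3, namely a(i,j) ≠ 0 and ν₃(a(i,j)) = j + ν₃(b(i,j)) for all i, j ∈ ℕ (where b(i,j) = (4i+6j+1)!/(2^(3i+4j)·3^(i+2j)·i!·j!) and ν₃(b(i,j)) = ν₃((4i+6j+1)!) − ν₃(i!) − ν₃(j!) − i − 2j), then for all i, j ∈ ℕ the integer 3^j divides a(i,j). -/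
open Nat

/-- Extension of `a : ℕ × ℕ → ℚ` to integer indices, taken to be `0`
whenever either index is negative. -/
def wext (a : ℕ × ℕ → ℚ) (k l : ℤ) : ℚ :=
  if 0 ≤ k ∧ 0 ≤ l then a (k.toNat, l.toNat) else 0

/-- `a : ℕ × ℕ → ℚ` satisfies the Weierstrass recursion:
`a(0,0) = 1` and for `(i,j) ≠ (0,0)`,
`a(i,j) = 3(i+1)·a(i+1,j−1) + (16/3)(j+1)·a(i−2,j+1) − (1/3)(4i+6j−1)(2i+3j−1)·a(i−1,j)`,
where terms with a negative index vanish. -/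
def WeierstrassRec (a : ℕ × ℕ → ℚ) : Prop :=
  a (0, 0) = 1 ∧
  ∀ i j : ℕ, (i, j) ≠ (0, 0) →
    a (i, j) =
      3 * ((i : ℚ) + 1) * wext a ((i : ℤ) + 1) ((j : ℤ) - 1)
      + (16 / 3) * ((j : ℚ) + 1) * wext a ((i : ℤ) - 2) ((j : ℤ) + 1)
      - (1 / 3) * (4 * (i : ℚ) + 6 * (j : ℚ) - 1) * (2 * (i : ℚ) + 3 * (j : ℚ) - 1)
          * wext a ((i : ℤ) - 1) (j : ℤ)

instance : Fact (Nat.Prime 3) := ⟨by norm_num⟩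

/-- Monotonicity of `padicValNat` under divisibility. -/
lemma padicValNat_le_of_dvd' {p x y : ℕ} [Fact p.Prime] (hxy : x ∣ y) (hy : y ≠ 0) :
    padicValNat p x ≤ padicValNat p y :=
  (padicValNat_dvd_iff_le hy).mp (dvd_trans pow_padicValNat_dvd hxy)

lemma padicValNat_add_le_factorial {m n : ℕ} :
    padicValNat 3 (m !) + padicValNat 3 (n !) ≤ padicValNat 3 ((m + n)!) := by
  rw [← padicValNat.mul (Nat.factorial_ne_zero m) (Nat.factorial_ne_zero n)]
  exact padicValNat_le_of_dvd' (Nat.factorial_mul_factorial_dvd_factorial_add m n)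
    (Nat.factorial_ne_zero _)

lemma key_ineq (i j : ℕ) :
    padicValNat 3 (i !) + padicValNat 3 (j !) + i + 2 * j ≤
      padicValNat 3 ((4 * i + 6 * j + 1)!) := by
  have h3i : padicValNat 3 ((3 * i)!) = padicValNat 3 (i !) + i :=
    padicValNat_factorial_mul i
  have h3j : padicValNat 3 ((3 * j)!) = padicValNat 3 (j !) + j :=
    padicValNat_factorial_mul j
  have hC : padicValNat 3 ((3 * i)!) + padicValNat 3 ((3 * j)!) ≤
      padicValNat 3 ((3 * i + 3 * j)!) := padicValNat_add_le_factorial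
  have hD : padicValNat 3 ((3 * j)!) ≤ padicValNat 3 ((i + 3 * j + 1)!) :=
    padicValNat_le_of_dvd'
      (Nat.factorial_dvd_factorial (by omega)) (Nat.factorial_ne_zero _)
  have hE : padicValNat 3 (((3 * i + 3 * j) + (i + 3 * j + 1))!) =
      padicValNat 3 ((4 * i + 6 * j + 1)!) := by ring_nf
  have hF : padicValNat 3 ((3 * i + 3 * j)!) + padicValNat 3 ((i + 3 * j + 1)!) ≤
      padicValNat 3 (((3 * i + 3 * j) + (i + 3 * j + 1))!) := padicValNat_add_le_factorial
  omega

/-- If the divisibility hypothesis holds for the prime 3, then `3^j ∣ a(i,j)`. -/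
theorem three_pow_dvd_of_hypothesis (a : ℕ × ℕ → ℚ) (ha : WeierstrassRec a)
    (hint : ∀ i j : ℕ, ∃ m : ℤ, a (i, j) = (m : ℚ))
    (hhyp : ∀ i j : ℕ, a (i, j) ≠ 0 ∧
      padicValRat 3 (a (i, j)) =
        (j : ℤ) + ((padicValNat 3 ((4 * i + 6 * j + 1)!) : ℤ)
          - (padicValNat 3 (i !) : ℤ) - (padicValNat 3 (j !) : ℤ) - (i : ℤ) - 2 * (j : ℤ))) :
    ∀ i j : ℕ, ∃ m : ℤ, a (i, j) = ((3 : ℚ) ^ j) * (m : ℚ) := by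
  intro i j
  obtain ⟨m, hm⟩ := hint i j
  obtain ⟨hne, hval⟩ := hhyp i j
  have hm0 : m ≠ 0 := by rintro rfl; simp [hm] at hne
  have hv : (padicValInt 3 m : ℤ) = padicValRat 3 (a (i, j)) := by
    rw [hm, padicValRat.of_int]
  have hkey := key_ineq i j
  have hj : (j : ℤ) ≤ padicValInt 3 m := by
    rw [hv, hval]; omega
  have hdvd : (3 : ℤ) ^ j ∣ m := by
    have := (padicValInt_dvd_iff (p := 3) j m).mpr (Or.inr (by exact_mod_cast hj))
    exact_mod_cast this
  obtain ⟨m', rfl⟩ := hdvd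
  exact ⟨m', by rw [hm]; push_cast; ring⟩
end
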